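/- arXiv:1707.01134 — 2 statements merged into one kernel-verified Lean document; each statement's English description precedes it below -/
import Mathlib

section
/- Let B = (B₁,…,B_m) be a random binary vector jointly distributed with Y. For any bit metrics q_j : {0,1} × Y → ℝ>0, the uncertainty ∑_{j=1}^m E[-log₂(q_j(B_j,Y)/∑_b q_j(b,Y))] is at least ∑_{j=1}^m H(B_j|Y), with equality when q_j(b,y) = P_{B_j|Y}(b|y). Consequently the bit-metric-decoding rate R_ps^bmd = [H(B) - ∑_j H(B_j|Y)]⁺ is the maximal layered-PS achievable rate over bit metrics. -/
open Finset Real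


/-- Gibbs-type inequality in natural log. -/
lemma my_gibbs {ι : Type*} [Fintype ι] (p w : ι → ℝ) (hp : ∀ i, 0 ≤ p i)
    (hw : ∀ i, 0 ≤ w i) (hpw : ∀ i, p i ≠ 0 → 0 < w i)
    (hsum : ∑ i, w i ≤ ∑ i, p i) :
    0 ≤ ∑ i ∈ Finset.univ.filter (fun i => p i ≠ 0), p i * Real.log (p i / w i) := by
  have h1 : ∀ i ∈ Finset.univ.filter (fun i => p i ≠ 0),
      p i - w i ≤ p i * Real.log (p i / w i) := by
    intro i hi
    simp only [Finset.mem_filter] at hi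
    have hpi : 0 < p i := lt_of_le_of_ne (hp i) (Ne.symm hi.2)
    have hwi : 0 < w i := hpw i hi.2
    have h2 : Real.log (w i / p i) ≤ w i / p i - 1 :=
      Real.log_le_sub_one_of_pos (by positivity)
    have hlog : Real.log (p i / w i) = - Real.log (w i / p i) := by
      rw [← Real.log_inv]; congr 1; field_simp
    rw [hlog]
    have h3 : p i * (1 - w i / p i) = p i - w i := by field_simp
    nlinarith
  have h4 : ∑ i ∈ Finset.univ.filter (fun i => p i ≠ 0), p i = ∑ i, p i :=
    Finset.sum_filter_ne_zero _
  have h5 : ∑ i ∈ Finset.univ.filter (fun i => p i ≠ 0), w i ≤ ∑ i, w i :=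
    Finset.sum_le_sum_of_subset_of_nonneg (Finset.filter_subset _ _) (fun i _ _ => hw i)
  calc (0:ℝ) ≤ ∑ i ∈ Finset.univ.filter (fun i => p i ≠ 0), (p i - w i) := by
        rw [Finset.sum_sub_distrib, h4]; linarith
    _ ≤ _ := Finset.sum_le_sum h1

/-- Regrouping a sum over `α × Y` by the value of `c` on the first coordinate. -/
lemma my_regroup {α Y : Type*} [Fintype α] [Fintype Y]
    (P : α × Y → ℝ) (c : α → Bool) (f : Bool → Y → ℝ) :
    ∑ p : α × Y, P p * f (c p.1) p.2
      = ∑ r : Bool × Y, (∑ a ∈ Finset.univ.filter (fun a => c a = r.1), P (a, r.2)) * f r.1 r.2 := by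
  rw [Fintype.sum_prod_type, Fintype.sum_prod_type]
  have : ∀ b : Bool, ∀ y : Y,
      (∑ a ∈ Finset.univ.filter (fun a => c a = b), P (a, y)) * f b y
        = ∑ a ∈ Finset.univ.filter (fun a => c a = b), P (a, y) * f (c a) y := by
    intro b y
    rw [Finset.sum_mul]
    refine Finset.sum_congr rfl fun a ha => ?_
    simp only [Finset.mem_filter] at ha
    rw [ha.2]
  simp_rw [this]
  refine Eq.symm ?_
  calc ∑ b : Bool, ∑ y : Y, ∑ a ∈ Finset.univ.filter (fun a => c a = b), P (a, y) * f (c a) y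
      = ∑ b : Bool, ∑ a ∈ Finset.univ.filter (fun a => c a = b), ∑ y : Y, P (a, y) * f (c a) y :=
        Finset.sum_congr rfl fun b _ => Finset.sum_comm
    _ = ∑ a : α, ∑ y : Y, P (a, y) * f (c a) y :=
        Finset.sum_fiberwise Finset.univ c _

lemma my_level_ineq {α Y : Type*} [Fintype α] [Fintype Y]
    (P : α × Y → ℝ) (hP0 : ∀ p, 0 ≤ P p)
    (c : α → Bool) (q : Bool → Y → ℝ) (hq : ∀ b y, 0 < q b y) :
    (∑ r ∈ Finset.univ.filter (fun r : Bool × Y =>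
        (∑ a ∈ Finset.univ.filter (fun a => c a = r.1), P (a, r.2)) ≠ 0),
      (∑ a ∈ Finset.univ.filter (fun a => c a = r.1), P (a, r.2)) *
        (-Real.logb 2 ((∑ a ∈ Finset.univ.filter (fun a => c a = r.1), P (a, r.2)) / ∑ a, P (a, r.2))))
    ≤ ∑ p : α × Y, P p * (-Real.logb 2 (q (c p.1) p.2 / ∑ b, q b p.2)) := by
  set Pj : Bool × Y → ℝ := fun r => ∑ a ∈ Finset.univ.filter (fun a => c a = r.1), P (a, r.2) with hPjdef
  set PY : Y → ℝ := fun y => ∑ a, P (a, y) with hPYdef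
  have hPj0 : ∀ r, 0 ≤ Pj r := fun r => Finset.sum_nonneg fun a _ => hP0 _
  have hPY0 : ∀ y, 0 ≤ PY y := fun y => Finset.sum_nonneg fun a _ => hP0 _
  have hfib : ∀ y, ∑ b, Pj (b, y) = PY y := fun y =>
    Finset.sum_fiberwise Finset.univ c (fun a => P (a, y))
  have hPjle : ∀ r : Bool × Y, Pj r ≤ PY r.2 := by
    intro r
    rw [← hfib r.2]
    have := Finset.single_le_sum (f := fun b => Pj (b, r.2))
      (fun b _ => hPj0 _) (Finset.mem_univ r.1)
    simpa using this
  have hZ : ∀ y, (0:ℝ) < ∑ b, q b y := fun y =>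
    Finset.sum_pos (fun b _ => hq b y) Finset.univ_nonempty
  set w : Bool × Y → ℝ := fun r => q r.1 r.2 / (∑ b, q b r.2) * PY r.2 with hwdef
  have hw0 : ∀ r, 0 ≤ w r := fun r =>
    mul_nonneg (le_of_lt (div_pos (hq _ _) (hZ _))) (hPY0 _)
  have hpw : ∀ r, Pj r ≠ 0 → 0 < w r := by
    intro r hr
    have h1 : 0 < Pj r := lt_of_le_of_ne (hPj0 r) (Ne.symm hr)
    exact mul_pos (div_pos (hq _ _) (hZ _)) (lt_of_lt_of_le h1 (hPjle r))
  have hsum : ∑ r, w r ≤ ∑ r, Pj r := by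
    have h1 : ∑ r : Bool × Y, w r = ∑ y, PY y := by
      rw [Fintype.sum_prod_type, Finset.sum_comm]
      refine Finset.sum_congr rfl fun y _ => ?_
      show ∑ x : Bool, q x y / (∑ b, q b y) * PY y = PY y
      rw [← Finset.sum_mul, ← Finset.sum_div, div_self (ne_of_gt (hZ y)), one_mul]
    have h2 : ∑ r : Bool × Y, Pj r = ∑ y, PY y := by
      rw [Fintype.sum_prod_type, Finset.sum_comm]
      exact Finset.sum_congr rfl fun y _ => hfib y
    rw [h1, h2]
  have hreg := my_regroup P c (fun b y => -Real.logb 2 (q b y / ∑ b', q b' y))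
  rw [hreg]
  have hfilt : ∑ r : Bool × Y, Pj r * (-Real.logb 2 (q r.1 r.2 / ∑ b', q b' r.2))
      = ∑ r ∈ Finset.univ.filter (fun r => Pj r ≠ 0),
          Pj r * (-Real.logb 2 (q r.1 r.2 / ∑ b', q b' r.2)) := by
    refine (Finset.sum_filter_of_ne fun r _ h => ?_).symm
    exact left_ne_zero_of_mul h
  rw [hfilt, ← sub_nonneg, ← Finset.sum_sub_distrib]
  have key : ∀ r ∈ Finset.univ.filter (fun r => Pj r ≠ 0),
      Pj r * (-Real.logb 2 (q r.1 r.2 / ∑ b', q b' r.2))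
        - Pj r * (-Real.logb 2 (Pj r / PY r.2))
      = Pj r * Real.log (Pj r / w r) / Real.log 2 := by
    intro r hr
    simp only [Finset.mem_filter] at hr
    have h1 : 0 < Pj r := lt_of_le_of_ne (hPj0 r) (Ne.symm hr.2)
    have h2 : 0 < PY r.2 := lt_of_lt_of_le h1 (hPjle r)
    have h3 : 0 < q r.1 r.2 / ∑ b', q b' r.2 := div_pos (hq _ _) (hZ _)
    have h4 : Pj r / w r = (Pj r / PY r.2) / (q r.1 r.2 / ∑ b', q b' r.2) := by
      rw [hwdef]
      field_simp
    have h5 : Real.log (Pj r / w r)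
        = Real.log (Pj r / PY r.2) - Real.log (q r.1 r.2 / ∑ b', q b' r.2) := by
      rw [h4, Real.log_div (by positivity) (ne_of_gt h3)]
    simp only [Real.logb, h5]
    field_simp
    ring
  rw [Finset.sum_congr rfl key]
  have hgibbs := my_gibbs Pj w hPj0 hw0 hpw hsum
  have hlog2 : (0:ℝ) < Real.log 2 := Real.log_pos one_lt_two
  rw [← Finset.sum_div]
  positivity

lemma my_level_eq {α Y : Type*} [Fintype α] [Fintype Y]
    (P : α × Y → ℝ) (hP0 : ∀ p, 0 ≤ P p)
    (c : α → Bool) (q : Bool → Y → ℝ)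
    (hqp : ∀ b y, (∑ a : α, P (a, y)) ≠ 0 →
      q b y = (∑ a ∈ Finset.univ.filter (fun a => c a = b), P (a, y)) / ∑ a : α, P (a, y)) :
    ∑ p : α × Y, P p * (-Real.logb 2 (q (c p.1) p.2 / ∑ b, q b p.2))
    = ∑ r ∈ Finset.univ.filter (fun r : Bool × Y =>
        (∑ a ∈ Finset.univ.filter (fun a => c a = r.1), P (a, r.2)) ≠ 0),
      (∑ a ∈ Finset.univ.filter (fun a => c a = r.1), P (a, r.2)) *
        (-Real.logb 2 ((∑ a ∈ Finset.univ.filter (fun a => c a = r.1), P (a, r.2)) / ∑ a, P (a, r.2))) := by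
  set Pj : Bool × Y → ℝ := fun r => ∑ a ∈ Finset.univ.filter (fun a => c a = r.1), P (a, r.2) with hPjdef
  set PY : Y → ℝ := fun y => ∑ a, P (a, y) with hPYdef
  have hPj0 : ∀ r, 0 ≤ Pj r := fun r => Finset.sum_nonneg fun a _ => hP0 _
  have hfib : ∀ y, ∑ b, Pj (b, y) = PY y := fun y =>
    Finset.sum_fiberwise Finset.univ c (fun a => P (a, y))
  have hPjle : ∀ r : Bool × Y, Pj r ≤ PY r.2 := by
    intro r
    rw [← hfib r.2]
    have := Finset.single_le_sum (f := fun b => Pj (b, r.2))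
      (fun b _ => hPj0 _) (Finset.mem_univ r.1)
    simpa using this
  rw [my_regroup P c (fun b y => -Real.logb 2 (q b y / ∑ b', q b' y))]
  rw [show ∑ r : Bool × Y, Pj r * (-Real.logb 2 (q r.1 r.2 / ∑ b', q b' r.2))
      = ∑ r ∈ Finset.univ.filter (fun r => Pj r ≠ 0),
          Pj r * (-Real.logb 2 (q r.1 r.2 / ∑ b', q b' r.2)) from
    (Finset.sum_filter_of_ne fun r _ h => left_ne_zero_of_mul h).symm]
  refine Finset.sum_congr rfl fun r hr => ?_
  simp only [Finset.mem_filter] at hr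
  have h1 : 0 < Pj r := lt_of_le_of_ne (hPj0 r) (Ne.symm hr.2)
  have h2 : 0 < PY r.2 := lt_of_lt_of_le h1 (hPjle r)
  have hZ : ∑ b, q b r.2 = 1 := by
    have : ∀ b, q b r.2 = Pj (b, r.2) / PY r.2 := fun b => hqp b r.2 (ne_of_gt h2)
    simp_rw [this]
    rw [← Finset.sum_div, hfib r.2, div_self (ne_of_gt h2)]
  rw [hZ, hqp r.1 r.2 (ne_of_gt h2)]
  norm_num
  exact Or.inl rfl


/-- For bit metrics, the sum of per-level uncertainties is at least `∑_j H(B_j|Y)`,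
with equality for the posterior bit metrics; consequently the BMD rate
`[H(B) - ∑_j H(B_j|Y)]⁺` upper-bounds (and is attained by) the layered-PS rate
over bit metrics. -/
theorem bmd_rate_maximal
    {Y : Type*} [Fintype Y] [Nonempty Y] (m : ℕ) (hm : 0 < m)
    (P : (Fin m → Bool) × Y → ℝ) (hP0 : ∀ p, 0 ≤ P p) (hP1 : ∑ p, P p = 1)
    (q : Fin m → Bool → Y → ℝ) (hq : ∀ j b y, 0 < q j b y) :
    (∑ j, ∑ p : (Fin m → Bool) × Y,
        P p * (-Real.logb 2 (q j (p.1 j) p.2 / ∑ b : Bool, q j b p.2)))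
      ≥ (∑ j, ∑ r ∈ Finset.univ.filter
            (fun r : Bool × Y => (∑ a ∈ Finset.univ.filter (fun a : Fin m → Bool => a j = r.1), P (a, r.2)) ≠ 0),
          (∑ a ∈ Finset.univ.filter (fun a : Fin m → Bool => a j = r.1), P (a, r.2))
            * (-Real.logb 2
                ((∑ a ∈ Finset.univ.filter (fun a : Fin m → Bool => a j = r.1), P (a, r.2))
                  / ∑ a : Fin m → Bool, P (a, r.2))))
    ∧ ((∀ j b y, (∑ a : Fin m → Bool, P (a, y)) ≠ 0 →
          q j b y = (∑ a ∈ Finset.univ.filter (fun a : Fin m → Bool => a j = b), P (a, y))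
              / ∑ a : Fin m → Bool, P (a, y)) →
        (∑ j, ∑ p : (Fin m → Bool) × Y,
            P p * (-Real.logb 2 (q j (p.1 j) p.2 / ∑ b : Bool, q j b p.2)))
          = (∑ j, ∑ r ∈ Finset.univ.filter
                (fun r : Bool × Y => (∑ a ∈ Finset.univ.filter (fun a : Fin m → Bool => a j = r.1), P (a, r.2)) ≠ 0),
              (∑ a ∈ Finset.univ.filter (fun a : Fin m → Bool => a j = r.1), P (a, r.2))
                * (-Real.logb 2
                    ((∑ a ∈ Finset.univ.filter (fun a : Fin m → Bool => a j = r.1), P (a, r.2))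
                      / ∑ a : Fin m → Bool, P (a, r.2)))))
    ∧ max 0
        ((∑ a ∈ Finset.univ.filter (fun a : Fin m → Bool => (∑ y, P (a, y)) ≠ 0),
            (∑ y, P (a, y)) * (-Real.logb 2 (∑ y, P (a, y))))
          - ∑ p : (Fin m → Bool) × Y,
              P p * (-Real.logb 2 ((∏ j, q j (p.1 j) p.2)
                  / ∑ a : Fin m → Bool, ∏ j, q j (a j) p.2)))
      ≤ max 0
          ((∑ a ∈ Finset.univ.filter (fun a : Fin m → Bool => (∑ y, P (a, y)) ≠ 0),
              (∑ y, P (a, y)) * (-Real.logb 2 (∑ y, P (a, y))))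
            - ∑ j, ∑ r ∈ Finset.univ.filter
                  (fun r : Bool × Y => (∑ a ∈ Finset.univ.filter (fun a : Fin m → Bool => a j = r.1), P (a, r.2)) ≠ 0),
                (∑ a ∈ Finset.univ.filter (fun a : Fin m → Bool => a j = r.1), P (a, r.2))
                  * (-Real.logb 2
                      ((∑ a ∈ Finset.univ.filter (fun a : Fin m → Bool => a j = r.1), P (a, r.2))
                        / ∑ a : Fin m → Bool, P (a, r.2)))) := by
  have part1 : (∑ j, ∑ r ∈ Finset.univ.filter
            (fun r : Bool × Y => (∑ a ∈ Finset.univ.filter (fun a : Fin m → Bool => a j = r.1), P (a, r.2)) ≠ 0),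
          (∑ a ∈ Finset.univ.filter (fun a : Fin m → Bool => a j = r.1), P (a, r.2))
            * (-Real.logb 2
                ((∑ a ∈ Finset.univ.filter (fun a : Fin m → Bool => a j = r.1), P (a, r.2))
                  / ∑ a : Fin m → Bool, P (a, r.2))))
      ≤ ∑ j, ∑ p : (Fin m → Bool) × Y,
          P p * (-Real.logb 2 (q j (p.1 j) p.2 / ∑ b : Bool, q j b p.2)) := by
    refine Finset.sum_le_sum fun j _ => ?_
    exact my_level_ineq P hP0 (fun a => a j) (q j) (hq j)
  refine ⟨part1, ?_, ?_⟩
  · intro hpost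
    refine Finset.sum_congr rfl fun j _ => ?_
    exact my_level_eq P hP0 (fun a => a j) (q j) (fun b y hy => hpost j b y hy)
  · have hprod : ∀ p : (Fin m → Bool) × Y,
        -Real.logb 2 ((∏ j, q j (p.1 j) p.2) / ∑ a : Fin m → Bool, ∏ j, q j (a j) p.2)
        = ∑ j, -Real.logb 2 (q j (p.1 j) p.2 / ∑ b, q j b p.2) := by
      intro p
      have hZ : ∀ j : Fin m, (0:ℝ) < ∑ b, q j b p.2 := fun j =>
        Finset.sum_pos (fun b _ => hq j b p.2) Finset.univ_nonempty
      have h1 : ∑ a : Fin m → Bool, ∏ j, q j (a j) p.2 = ∏ j, ∑ b, q j b p.2 := by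
        rw [Finset.prod_univ_sum, Fintype.piFinset_univ]
      rw [h1, ← Finset.prod_div_distrib,
        Real.logb_prod _ _ (fun j _ => ne_of_gt (div_pos (hq j _ _) (hZ j))),
        ← Finset.sum_neg_distrib]
    have hswap : ∑ p : (Fin m → Bool) × Y,
        P p * (-Real.logb 2 ((∏ j, q j (p.1 j) p.2) / ∑ a : Fin m → Bool, ∏ j, q j (a j) p.2))
        = ∑ j, ∑ p : (Fin m → Bool) × Y,
            P p * (-Real.logb 2 (q j (p.1 j) p.2 / ∑ b : Bool, q j b p.2)) := by
      simp_rw [hprod, Finset.mul_sum]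
      rw [Finset.sum_comm]
    rw [hswap]
    exact max_le_max le_rfl (sub_le_sub_left part1 _)
end

section
/- Consider the Hamming metric 𝟙(a,b) (1 if a=b, 0 otherwise) on a finite set X with |X| = M ≥ 2, and the exponentiated metric e^{s·𝟙(a,b)} for s > 0. For random variables X, Ŷ on X with ε := Pr(X ≠ Ŷ) ∈ (0,1), the uncertainty E[-log₂( e^{s𝟙(X,Ŷ)} / (M-1+e^s) )] is minimized over s > 0 at e^s = (M-1)(1-ε)/ε (assuming ε < (M-1)/M), and the minimum value equals H₂(ε) + ε·log₂(M-1), where H₂ is the binary entropy function. -/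
open Real

/-- For the exponentiated Hamming metric on an alphabet of size `M ≥ 2`, with error
probability `ε ∈ (0,(M-1)/M)`, the uncertainty
`-(1-ε) log₂(e^s/(M-1+e^s)) - ε log₂(1/(M-1+e^s))` is minimized over `s > 0` at
`e^s = (M-1)(1-ε)/ε`, with minimum value `H₂(ε) + ε log₂(M-1)`. -/
theorem hard_decision_uncertainty_min
    (M : ℕ) (hM : 2 ≤ M) (ε : ℝ) (hε0 : 0 < ε) (hε1 : ε < ((M : ℝ) - 1) / M) :
    let f : ℝ → ℝ := fun s =>
      -(1 - ε) * Real.logb 2 (Real.exp s / ((M : ℝ) - 1 + Real.exp s))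
        - ε * Real.logb 2 (1 / ((M : ℝ) - 1 + Real.exp s))
    let s₀ : ℝ := Real.log (((M : ℝ) - 1) * (1 - ε) / ε)
    let H₂ : ℝ := -ε * Real.logb 2 ε - (1 - ε) * Real.logb 2 (1 - ε)
    0 < s₀ ∧ Real.exp s₀ = ((M : ℝ) - 1) * (1 - ε) / ε
      ∧ f s₀ = H₂ + ε * Real.logb 2 ((M : ℝ) - 1)
      ∧ ∀ s : ℝ, 0 < s → H₂ + ε * Real.logb 2 ((M : ℝ) - 1) ≤ f s := by
  intro f s₀ H₂
  have hMR : (2:ℝ) ≤ (M:ℝ) := by exact_mod_cast hM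
  have hM0 : (0:ℝ) < M := by linarith
  set A : ℝ := (M:ℝ) - 1 with hA
  have hA0 : (0:ℝ) < A := by simp [hA]; linarith
  have hεM : ε * M < A := by
    have := (lt_div_iff₀ hM0).mp hε1; linarith
  have hε1' : ε < 1 := by nlinarith
  have h1ε : (0:ℝ) < 1 - ε := by linarith
  have ht₀ : (0:ℝ) < A * (1 - ε) / ε := by positivity
  have hkey : 1 < A * (1 - ε) / ε := by
    rw [lt_div_iff₀ hε0]; nlinarith
  have h2 : (0:ℝ) < Real.log 2 := Real.log_pos one_lt_two
  refine ⟨Real.log_pos hkey, Real.exp_log ht₀, ?_, ?_⟩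
  · -- value at s₀
    have et₀ : Real.exp s₀ = A * (1 - ε) / ε := Real.exp_log ht₀
    have hc₀ : A + A * (1 - ε) / ε = A / ε := by field_simp; ring
    have h1' : A * (1 - ε) / ε / (A + A * (1 - ε) / ε) = 1 - ε := by
      rw [hc₀]; field_simp
    have h2' : 1 / (A + A * (1 - ε) / ε) = ε / A := by
      rw [hc₀, one_div_div]
    show -(1 - ε) * Real.logb 2 (Real.exp s₀ / (A + Real.exp s₀))
        - ε * Real.logb 2 (1 / (A + Real.exp s₀)) = H₂ + ε * Real.logb 2 A
    rw [et₀, h1', h2', Real.logb_div hε0.ne' hA0.ne']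
    show _ = -ε * Real.logb 2 ε - (1 - ε) * Real.logb 2 (1 - ε) + ε * Real.logb 2 A
    ring
  · -- minimality
    intro s _
    set t : ℝ := Real.exp s with ht
    have ht0 : 0 < t := Real.exp_pos s
    have hc0 : 0 < A + t := by linarith
    have e1 : Real.log (t / ((1 - ε) * (A + t))) ≤ t / ((1 - ε) * (A + t)) - 1 :=
      Real.log_le_sub_one_of_pos (by positivity)
    have e2 : Real.log (A / (ε * (A + t))) ≤ A / (ε * (A + t)) - 1 :=
      Real.log_le_sub_one_of_pos (by positivity)
    rw [Real.log_div ht0.ne' (by positivity), Real.log_mul h1ε.ne' hc0.ne'] at e1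
    rw [Real.log_div hA0.ne' (by positivity), Real.log_mul hε0.ne' hc0.ne'] at e2
    have hsum : (1 - ε) * (t / ((1 - ε) * (A + t)) - 1)
        + ε * (A / (ε * (A + t)) - 1) = 0 := by
      field_simp; ring
    have main : (1 - ε) * Real.log t - (1 - ε) * Real.log (1 - ε) - ε * Real.log ε
        + ε * Real.log A ≤ Real.log (A + t) := by
      nlinarith [mul_le_mul_of_nonneg_left e1 h1ε.le, mul_le_mul_of_nonneg_left e2 hε0.le]
    show H₂ + ε * Real.logb 2 A ≤
        -(1 - ε) * Real.logb 2 (t / (A + t)) - ε * Real.logb 2 (1 / (A + t))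
    have hfs : -(1 - ε) * Real.logb 2 (t / (A + t)) - ε * Real.logb 2 (1 / (A + t))
        = (Real.log (A + t) - (1 - ε) * Real.log t) / Real.log 2 := by
      simp only [Real.logb, Real.log_div ht0.ne' hc0.ne', one_div,
        Real.log_inv]
      field_simp; ring
    have hH : H₂ + ε * Real.logb 2 A
        = (-ε * Real.log ε - (1 - ε) * Real.log (1 - ε) + ε * Real.log A) / Real.log 2 := by
      show -ε * Real.logb 2 ε - (1 - ε) * Real.logb 2 (1 - ε) + ε * Real.logb 2 A = _
      simp only [Real.logb]
      field_simp
    rw [hfs, hH, div_le_div_iff_of_pos_right h2]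
    linarith
end
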